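/- Let x ∈ M_ℝ ≅ ℝⁿ and let Σ be a complete fan with rays Σ(1). Define C_x := ⋂ {H_{ρ≥c} : ρ ∈ Σ(1), c ∈ ℤ, x ∈ H_{ρ≥c}} where H_{ρ≥c} := {m : ⟨m, ρ⟩ ≥ c}. Then C_x is a nonempty compact convex set containing x. -/
import Mathlib


open Finset

variable {n : ℕ}

/-- The standard pairing on `ℝⁿ`. -/
def dotR (m v : Fin n → ℝ) : ℝ := ∑ i, m i * v i

lemma dotR_sum_right {r : ℕ} (m : Fin n → ℝ) (w : Fin r → ℝ) (u : Fin r → (Fin n → ℝ)) :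
    dotR m (∑ i, w i • u i) = ∑ i, w i * dotR m (u i) := by
  simp only [dotR, Finset.sum_apply, Pi.smul_apply, smul_eq_mul, Finset.mul_sum]
  rw [Finset.sum_comm]
  exact Finset.sum_congr rfl fun i _ => Finset.sum_congr rfl fun j _ => by ring

lemma dotR_single (m : Fin n → ℝ) (j : Fin n) :
    dotR m (Pi.single j 1) = m j := by
  simp [dotR, Pi.single_apply, mul_ite]

lemma dotR_neg (m v : Fin n → ℝ) : dotR m (-v) = -dotR m v := by
  simp [dotR, Finset.sum_neg_distrib]

lemma continuous_dotR (v : Fin n → ℝ) : Continuous fun m : Fin n → ℝ => dotR m v := by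
  unfold dotR
  exact continuous_finset_sum _ fun i _ => (continuous_apply i).mul continuous_const

lemma dotR_comb (a b v : Fin n → ℝ) (s t : ℝ) :
    dotR (s • a + t • b) v = s * dotR a v + t * dotR b v := by
  simp only [dotR, Pi.add_apply, Pi.smul_apply, smul_eq_mul, Finset.mul_sum,
    ← Finset.sum_add_distrib]
  exact Finset.sum_congr rfl fun i _ => by ring

/-- let `x ∈ M_ℝ ≅ ℝⁿ` and let `u 1, …, u r` be the (primitive
generators of the) rays of a complete fan `Σ`, so that they positively span
`ℝⁿ`.  Then
`C_x := ⋂ {H_{ρ ≥ c} : ρ ∈ Σ(1), c ∈ ℤ, x ∈ H_{ρ ≥ c}}`, where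
`H_{ρ ≥ c} = {m : ⟨m, ρ⟩ ≥ c}`, is a nonempty compact convex set containing
`x`. -/
theorem stmt15 (r : ℕ) (u : Fin r → (Fin n → ℝ))
    (hspan : ∀ v : Fin n → ℝ, ∃ w : Fin r → ℝ,
      (∀ i, 0 ≤ w i) ∧ v = ∑ i, w i • u i)
    (x : Fin n → ℝ) :
    x ∈ {m : Fin n → ℝ | ∀ (i : Fin r) (c : ℤ),
        (c : ℝ) ≤ dotR x (u i) → (c : ℝ) ≤ dotR m (u i)} ∧
    Convex ℝ {m : Fin n → ℝ | ∀ (i : Fin r) (c : ℤ),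
        (c : ℝ) ≤ dotR x (u i) → (c : ℝ) ≤ dotR m (u i)} ∧
    IsCompact {m : Fin n → ℝ | ∀ (i : Fin r) (c : ℤ),
        (c : ℝ) ≤ dotR x (u i) → (c : ℝ) ≤ dotR m (u i)} ∧
    Set.Nonempty {m : Fin n → ℝ | ∀ (i : Fin r) (c : ℤ),
        (c : ℝ) ≤ dotR x (u i) → (c : ℝ) ≤ dotR m (u i)} := by
  set S := {m : Fin n → ℝ | ∀ (i : Fin r) (c : ℤ),
      (c : ℝ) ≤ dotR x (u i) → (c : ℝ) ≤ dotR m (u i)} with hS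
  have hxS : x ∈ S := fun i c h => h
  -- key lower bound: for m ∈ S, dotR m (u i) ≥ ⌊dotR x (u i)⌋
  have hlow : ∀ m ∈ S, ∀ i, (⌊dotR x (u i)⌋ : ℝ) ≤ dotR m (u i) := by
    intro m hm i
    exact hm i ⌊dotR x (u i)⌋ (Int.floor_le _)
  -- bound along any nonneg combination
  have hbd : ∀ (v : Fin n → ℝ), ∃ B : ℝ, ∀ m ∈ S, B ≤ dotR m v := by
    intro v
    obtain ⟨w, hw0, hwv⟩ := hspan v
    refine ⟨∑ i, w i * (⌊dotR x (u i)⌋ : ℝ), fun m hm => ?_⟩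
    rw [hwv, dotR_sum_right]
    exact Finset.sum_le_sum fun i _ =>
      mul_le_mul_of_nonneg_left (hlow m hm i) (hw0 i)
  -- S is closed
  have hclosed : IsClosed S := by
    have : S = ⋂ (i : Fin r), ⋂ (c : ℤ),
        {m : Fin n → ℝ | (c : ℝ) ≤ dotR x (u i) → (c : ℝ) ≤ dotR m (u i)} := by
      ext m; simp [hS, Set.mem_iInter]
    rw [this]
    refine isClosed_iInter fun i => isClosed_iInter fun c => ?_
    by_cases h : (c : ℝ) ≤ dotR x (u i)
    · have : {m : Fin n → ℝ | (c : ℝ) ≤ dotR x (u i) → (c : ℝ) ≤ dotR m (u i)}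
          = (fun m : Fin n → ℝ => dotR m (u i)) ⁻¹' Set.Ici (c : ℝ) := by
        ext m; simp [h]
      rw [this]
      exact isClosed_Ici.preimage (continuous_dotR _)
    · have : {m : Fin n → ℝ | (c : ℝ) ≤ dotR x (u i) → (c : ℝ) ≤ dotR m (u i)}
          = Set.univ := by
        ext m; simp [h]
      rw [this]; exact isClosed_univ
  -- coordinate bounds
  choose a ha using fun j => hbd (Pi.single j 1)
  choose b hb using fun j => hbd (-(Pi.single j 1))
  have hsub : S ⊆ Set.Icc a (fun j => -(b j)) := by
    intro m hm
    constructor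
    · intro j
      have := ha j m hm
      rwa [dotR_single] at this
    · intro j
      have := hb j m hm
      rw [dotR_neg, dotR_single] at this
      show m j ≤ -(b j)
      linarith
  refine ⟨hxS, ?_, ?_, ⟨x, hxS⟩⟩
  · intro p hp q hq s t hs ht hst
    intro i c h
    have h1 := hp i c h
    have h2 := hq i c h
    have : (c : ℝ) = s * c + t * c := by rw [← add_mul, hst, one_mul]
    rw [Set.mem_setOf_eq] at *
    calc (c : ℝ) = s * c + t * c := this
      _ ≤ s * dotR p (u i) + t * dotR q (u i) := by
          gcongr
      _ = dotR (s • p + t • q) (u i) := (dotR_comb p q (u i) s t).symm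
  · exact (isCompact_Icc).of_isClosed_subset hclosed hsub
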